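/- For all t ∈ (0, π/2): (8/π)·1/(4 - cos t) < sin t / t < 3/(4 - cos t). -/

import Mathlib

open Real

private noncomputable def gg : ℝ → ℝ := fun x => Real.sin x * (4 - Real.cos x) - (8/Real.pi) * x

private lemma gg_deriv1 (x : ℝ) :
    HasDerivAt gg (Real.cos x * (4 - Real.cos x) + Real.sin x ^ 2 - 8/Real.pi) x := by
  have h1 := (Real.hasDerivAt_sin x).mul ((hasDerivAt_const x (4:ℝ)).sub (Real.hasDerivAt_cos x))
  have h2 := (hasDerivAt_id x).const_mul (8/Real.pi)
  have := h1.sub h2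
  refine this.congr_deriv ?_
  simp only [Pi.sub_apply]
  ring

private lemma gg_deriv2 (x : ℝ) :
    HasDerivAt (fun y => Real.cos y * (4 - Real.cos y) + Real.sin y ^ 2 - 8/Real.pi)
      (4 * Real.sin x * (Real.cos x - 1)) x := by
  have h1 := (Real.hasDerivAt_cos x).mul ((hasDerivAt_const x (4:ℝ)).sub (Real.hasDerivAt_cos x))
  have h2 := (Real.hasDerivAt_sin x).pow 2
  have := (h1.add h2).sub_const (8/Real.pi)
  refine this.congr_deriv ?_
  simp only [Pi.sub_apply]
  ring

private lemma gg_pos (t : ℝ) (ht : t ∈ Set.Ioo 0 (Real.pi/2)) : 0 < gg t := by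
  obtain ⟨ht0, ht1⟩ := ht
  have hpi := Real.pi_pos
  have hconc : StrictConcaveOn ℝ (Set.Icc 0 (Real.pi/2)) gg := by
    apply strictConcaveOn_of_deriv2_neg (convex_Icc _ _)
    · exact Continuous.continuousOn (by
        have : Continuous gg := by
          unfold gg; fun_prop
        exact this)
    · intro x hx
      rw [interior_Icc] at hx
      obtain ⟨hx1, hx2⟩ := hx
      have hd1 : deriv gg = fun y => Real.cos y * (4 - Real.cos y) + Real.sin y ^ 2 - 8/Real.pi := by
        funext y; exact (gg_deriv1 y).deriv
      have : deriv^[2] gg x = 4 * Real.sin x * (Real.cos x - 1) := by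
        show deriv (deriv gg) x = _
        rw [hd1]
        exact (gg_deriv2 x).deriv
      rw [this]
      have hs : 0 < Real.sin x := Real.sin_pos_of_pos_of_lt_pi hx1 (by linarith)
      have hc : Real.cos x < 1 := by
        have := Real.strictAntiOn_cos ⟨le_refl 0, by linarith⟩ ⟨hx1.le, by linarith⟩ hx1
        simpa using this
      nlinarith
  have h0 : (0:ℝ) ∈ Set.Icc 0 (Real.pi/2) := by constructor <;> linarith
  have h1 : (Real.pi/2) ∈ Set.Icc 0 (Real.pi/2) := by constructor <;> linarith
  have hne : (0:ℝ) ≠ Real.pi/2 := by linarith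
  set b : ℝ := t / (Real.pi/2) with hb
  have hb0 : 0 < b := div_pos ht0 (by linarith)
  have hb1 : b < 1 := (div_lt_one (by linarith)).mpr ht1
  have key := hconc.2 h0 h1 hne (show (0:ℝ) < 1 - b by linarith) hb0 (show (1-b)+b = 1 by ring)
  have hcomb : (1 - b) • (0:ℝ) + b • (Real.pi/2) = t := by
    simp [hb, smul_eq_mul]
  rw [hcomb] at key
  have hg0 : gg 0 = 0 := by simp [gg]
  have hg1 : gg (Real.pi/2) = 0 := by
    simp [gg, Real.sin_pi_div_two, Real.cos_pi_div_two]
    field_simp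
    norm_num
  rw [hg0, hg1] at key
  simpa using key

private noncomputable def ff : ℝ → ℝ := fun x => 3 * x - Real.sin x * (4 - Real.cos x)

private lemma ff_pos (t : ℝ) (ht : t ∈ Set.Ioo 0 (Real.pi/2)) : 0 < ff t := by
  obtain ⟨ht0, ht1⟩ := ht
  have hpi := Real.pi_pos
  have hmono : StrictMonoOn ff (Set.Icc 0 (Real.pi/2)) := by
    apply strictMonoOn_of_deriv_pos (convex_Icc _ _)
    · exact Continuous.continuousOn (by unfold ff; fun_prop)
    · intro x hx
      rw [interior_Icc] at hx
      obtain ⟨hx1, hx2⟩ := hx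
      have hd : HasDerivAt ff (3 - (Real.cos x * (4 - Real.cos x) + Real.sin x ^ 2)) x := by
        have h1 := (Real.hasDerivAt_sin x).mul ((hasDerivAt_const x (4:ℝ)).sub (Real.hasDerivAt_cos x))
        have h2 := (hasDerivAt_id x).const_mul (3:ℝ)
        have := h2.sub h1
        refine this.congr_deriv ?_
        simp only [Pi.sub_apply]
        ring
      rw [hd.deriv]
      have hc : Real.cos x < 1 := by
        have := Real.strictAntiOn_cos ⟨le_refl 0, by linarith⟩ ⟨hx1.le, by linarith⟩ hx1
        simpa using this
      have hsc := Real.sin_sq_add_cos_sq x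
      nlinarith
  have h0 : (0:ℝ) ∈ Set.Icc 0 (Real.pi/2) := by constructor <;> linarith
  have ht' : t ∈ Set.Icc 0 (Real.pi/2) := by constructor <;> linarith
  have := hmono h0 ht' ht0
  simpa [ff] using this

theorem stmt8 (t : ℝ) (ht : t ∈ Set.Ioo 0 (Real.pi/2)) :
    (8/Real.pi) * (1/(4 - Real.cos t)) < Real.sin t / t ∧
    Real.sin t / t < 3/(4 - Real.cos t) := by
  obtain ⟨ht0, ht1⟩ := ht
  have hpi := Real.pi_pos
  have hc1 : Real.cos t ≤ 1 := Real.cos_le_one t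
  have h4 : 0 < 4 - Real.cos t := by linarith
  have hg := gg_pos t ⟨ht0, ht1⟩
  have hf := ff_pos t ⟨ht0, ht1⟩
  unfold gg at hg
  unfold ff at hf
  constructor
  · rw [mul_one_div, div_lt_div_iff₀ (by positivity) ht0]
    rw [div_mul_eq_mul_div, lt_div_iff₀ (by positivity)] at *
    nlinarith
  · rw [div_lt_div_iff₀ ht0 h4]
    nlinarith
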